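/- (Exactness of ERA-type realization from a rank factorization.) Let A ∈ ℝ^{n×n}, B ∈ ℝ^{n×m}, C ∈ ℝ^{p×n}, and s ≥ 2, and set h_k = C A^{k−1} B for 1 ≤ k ≤ 2s−1. Assume the depth-(s−1) observability matrix (block rows C, CA, …, CA^{s−2}) has rank n and the depth-s controllability matrix (block columns B, AB, …, A^{s−1}B) has rank n. Let H ∈ ℝ^{ps×ms} be the block Hankel matrix with (i,j)-th block h_{i+j−1}, and suppose H = O'·𝒞' where O' ∈ ℝ^{ps×n} has full column rank n and 𝒞' ∈ ℝ^{n×ms} has full row rank n. Let O'_f and O'_l be the first and last p(s−1) rows of O'. Then O'_f has full column rank, and the realization A' = (O'_fᵀO'_f)⁻¹O'_fᵀO'_l, B' = the first m columns of 𝒞', C' = the first p rows of O', reproduces all given Markov parameters: C' (A')^{k−1} B' = h_k for every 1 ≤ k ≤ 2s−1. -/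
import Mathlib


open Matrix

/-- The block Hankel matrix of Markov parameters of depth `s` of a realization
`(A,B,C)`: its `(i,j)`-th `p×m` block is `h_{i+j−1} = C A^{i+j−2} B`
(0-based: `C A^{i+j} B`). -/
def markovHankel {n m p : ℕ} (s : ℕ) (A : Matrix (Fin n) (Fin n) ℝ)
    (B : Matrix (Fin n) (Fin m) ℝ) (C : Matrix (Fin p) (Fin n) ℝ) :
    Matrix (Fin s × Fin p) (Fin s × Fin m) ℝ :=
  Matrix.of fun ia jb => (C * A ^ ((ia.1 : ℕ) + (jb.1 : ℕ)) * B) ia.2 jb.2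

/-- The observability matrix of depth `t`: its `i`-th `p×n` block row is `C A^{i−1}`. -/
def obsMatrix {n p : ℕ} (t : ℕ) (A : Matrix (Fin n) (Fin n) ℝ)
    (C : Matrix (Fin p) (Fin n) ℝ) : Matrix (Fin t × Fin p) (Fin n) ℝ :=
  Matrix.of fun ia x => (C * A ^ (ia.1 : ℕ)) ia.2 x

/-- The controllability matrix of depth `t`: its `j`-th `n×m` block column is `A^{j−1} B`. -/
def ctrlMatrix {n m : ℕ} (t : ℕ) (A : Matrix (Fin n) (Fin n) ℝ)
    (B : Matrix (Fin n) (Fin m) ℝ) : Matrix (Fin n) (Fin t × Fin m) ℝ :=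
  Matrix.of fun x jb => (A ^ (jb.1 : ℕ) * B) x jb.2

lemma isUnit_of_rank_eq_card {n : ℕ} (M : Matrix (Fin n) (Fin n) ℝ) (h : M.rank = n) :
    IsUnit M := by
  rw [← Matrix.mulVec_surjective_iff_isUnit]
  have hrange : LinearMap.range M.mulVecLin = ⊤ := by
    apply Submodule.eq_top_of_finrank_eq
    show M.rank = _
    rw [h]; simp [Module.finrank_pi]
  have hsurj := LinearMap.range_eq_top.mp hrange
  intro v
  obtain ⟨w, hw⟩ := hsurj v
  exact ⟨w, by simpa using hw⟩

/-- **Exactness of the ERA/Ho–Kalman realization from a rank factorization.**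
If the Markov parameters `h_k = C A^{k−1} B` come from a realization whose
depth-`(s−1)` observability matrix and depth-`s` controllability matrix both
have rank `n`, and `H = O' 𝒞'` is any rank factorization of the depth-`s`
block Hankel matrix with `O'` of full column rank `n` and `𝒞'` of full row
rank `n`, then `O'_f` has full column rank and the realization
`A' = (O'_fᵀO'_f)⁻¹O'_fᵀO'_l`, `B' = 𝒞'[I_m; 0]`, `C' = [I_p, 0]O'`
reproduces all given Markov parameters: `C' A'^{k−1} B' = h_k`
for `1 ≤ k ≤ 2s−1`. -/
theorem era_exact_recovery {n m p : ℕ} (s : ℕ) (hs : 2 ≤ s)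
    (A : Matrix (Fin n) (Fin n) ℝ) (B : Matrix (Fin n) (Fin m) ℝ)
    (C : Matrix (Fin p) (Fin n) ℝ)
    (hobs : (obsMatrix (s - 1) A C).rank = n)
    (hctrl : (ctrlMatrix s A B).rank = n)
    (O' : Matrix (Fin s × Fin p) (Fin n) ℝ)
    (𝒞' : Matrix (Fin n) (Fin s × Fin m) ℝ)
    (hfact : markovHankel s A B C = O' * 𝒞')
    (hO'rank : O'.rank = n) (h𝒞'rank : 𝒞'.rank = n)
    (O'f O'l : Matrix (Fin (s - 1) × Fin p) (Fin n) ℝ)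
    (hO'f : ∀ ia x, O'f ia x
      = O' (⟨(ia.1 : ℕ), lt_of_lt_of_le ia.1.isLt (Nat.sub_le s 1)⟩, ia.2) x)
    (hO'l : ∀ ia x, O'l ia x
      = O' (⟨(ia.1 : ℕ) + 1, by have := ia.1.isLt; omega⟩, ia.2) x)
    (A' : Matrix (Fin n) (Fin n) ℝ) (hA' : A' = (O'fᵀ * O'f)⁻¹ * O'fᵀ * O'l)
    (B' : Matrix (Fin n) (Fin m) ℝ) (hB' : ∀ x b, B' x b = 𝒞' x (⟨0, by omega⟩, b))
    (C' : Matrix (Fin p) (Fin n) ℝ) (hC' : ∀ a x, C' a x = O' (⟨0, by omega⟩, a) x) :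
    O'f.rank = n ∧
    ∀ k, 1 ≤ k → k ≤ 2 * s - 1 → C' * A' ^ (k - 1) * B' = C * A ^ (k - 1) * B := by
  set O : Matrix (Fin s × Fin p) (Fin n) ℝ := obsMatrix s A C with hOdef
  set Cs : Matrix (Fin n) (Fin s × Fin m) ℝ := ctrlMatrix s A B with hCsdef
  set P : Matrix (Fin (s - 1) × Fin p) (Fin n) ℝ := obsMatrix (s - 1) A C with hPdef
  -- the Hankel matrix factors as O * Cs
  have hH : markovHankel s A B C = O * Cs := by
    ext ia jb
    have hsplit : C * A ^ ((ia.1 : ℕ) + (jb.1 : ℕ)) * B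
        = (C * A ^ (ia.1 : ℕ)) * (A ^ (jb.1 : ℕ) * B) := by
      rw [pow_add, ← Matrix.mul_assoc, Matrix.mul_assoc]
    show (C * A ^ ((ia.1 : ℕ) + (jb.1 : ℕ)) * B) ia.2 jb.2 = (O * Cs) ia jb
    rw [hsplit, Matrix.mul_apply, Matrix.mul_apply]
    refine Finset.sum_congr rfl fun x _ => ?_
    simp [hOdef, hCsdef, obsMatrix, ctrlMatrix]
  -- unit facts
  have hCCt : IsUnit (Cs * Csᵀ).det := by
    rw [← Matrix.isUnit_iff_isUnit_det]
    apply isUnit_of_rank_eq_card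
    rw [Matrix.rank_self_mul_transpose, hctrl]
  have hOtO' : IsUnit (O'ᵀ * O').det := by
    rw [← Matrix.isUnit_iff_isUnit_det]
    apply isUnit_of_rank_eq_card
    rw [Matrix.rank_transpose_mul_self, hO'rank]
  have hPtP : IsUnit (Pᵀ * P).det := by
    rw [← Matrix.isUnit_iff_isUnit_det]
    apply isUnit_of_rank_eq_card
    rw [Matrix.rank_transpose_mul_self, hobs]
  -- the change-of-basis matrix T
  set T : Matrix (Fin n) (Fin n) ℝ := 𝒞' * Csᵀ * (Cs * Csᵀ)⁻¹ with hTdef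
  have hOT : O' * T = O := by
    rw [hTdef, ← Matrix.mul_assoc, ← Matrix.mul_assoc, ← hfact, hH,
      Matrix.mul_assoc O Cs Csᵀ, Matrix.mul_assoc O,
      Matrix.mul_nonsing_inv _ hCCt, Matrix.mul_one]
  have hTC : T * Cs = 𝒞' := by
    have hleft : (O'ᵀ * O')⁻¹ * O'ᵀ * O' = 1 := by
      rw [Matrix.mul_assoc, Matrix.nonsing_inv_mul _ hOtO']
    calc T * Cs = ((O'ᵀ * O')⁻¹ * O'ᵀ * O') * (T * Cs) := by rw [hleft, Matrix.one_mul]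
      _ = (O'ᵀ * O')⁻¹ * O'ᵀ * (O' * T * Cs) := by
          simp only [Matrix.mul_assoc]
      _ = (O'ᵀ * O')⁻¹ * O'ᵀ * (O' * 𝒞') := by rw [hOT, ← hH, hfact]
      _ = ((O'ᵀ * O')⁻¹ * O'ᵀ * O') * 𝒞' := by simp only [Matrix.mul_assoc]
      _ = 𝒞' := by rw [hleft, Matrix.one_mul]
  -- T is invertible
  have hTunit : IsUnit T.det := by
    rw [← Matrix.isUnit_iff_isUnit_det]
    apply isUnit_of_rank_eq_card
    refine le_antisymm (le_trans (Matrix.rank_le_card_width T) (by simp)) ?_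
    calc n = 𝒞'.rank := h𝒞'rank.symm
      _ = (T * Cs).rank := by rw [hTC]
      _ ≤ T.rank := Matrix.rank_mul_le_left T Cs
  set U : Matrix (Fin n) (Fin n) ℝ := T⁻¹ with hUdef
  have hTU : T * U = 1 := Matrix.mul_nonsing_inv _ hTunit
  have hUT : U * T = 1 := Matrix.nonsing_inv_mul _ hTunit
  have hUunit : IsUnit U.det := by
    exact T.isUnit_nonsing_inv_det hTunit
  have hO'eq : O' = O * U := by
    rw [← hOT, Matrix.mul_assoc, hTU, Matrix.mul_one]
  -- componentwise identifications
  have hC'eq : C' = C * U := by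
    ext a x
    rw [hC', hO'eq, Matrix.mul_apply, Matrix.mul_apply]
    refine Finset.sum_congr rfl fun y _ => ?_
    simp [hOdef, obsMatrix]
  have hB'eq : B' = T * B := by
    ext x b
    rw [hB', ← hTC, Matrix.mul_apply, Matrix.mul_apply]
    refine Finset.sum_congr rfl fun y _ => ?_
    simp [hCsdef, ctrlMatrix]
  have hO'feq : O'f = P * U := by
    ext ia x
    rw [hO'f, hO'eq, Matrix.mul_apply, Matrix.mul_apply]
    refine Finset.sum_congr rfl fun y _ => ?_
    simp [hOdef, hPdef, obsMatrix]
  have hO'leq : O'l = P * A * U := by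
    ext ia x
    rw [hO'l, hO'eq, Matrix.mul_apply, Matrix.mul_apply]
    refine Finset.sum_congr rfl fun y _ => ?_
    congr 1
    show (C * A ^ ((ia.1 : ℕ) + 1)) ia.2 y = (P * A) ia y
    rw [pow_succ, ← Matrix.mul_assoc, Matrix.mul_apply, Matrix.mul_apply]
    refine Finset.sum_congr rfl fun z _ => ?_
    congr 1
  -- inverse relations for transposes
  have hUtTt : Uᵀ * Tᵀ = 1 := by rw [← Matrix.transpose_mul, hTU, Matrix.transpose_one]
  have hTtUt : Tᵀ * Uᵀ = 1 := by rw [← Matrix.transpose_mul, hUT, Matrix.transpose_one]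
  clear_value O Cs P T U
  -- rank of O'f
  have hrankf : O'f.rank = n := by
    rw [hO'feq, Matrix.rank_mul_eq_left_of_isUnit_det _ _ hUunit, hobs]
  refine ⟨hrankf, ?_⟩
  -- A' = T * A * U
  have hGram : O'fᵀ * O'f = Uᵀ * (Pᵀ * P) * U := by
    rw [hO'feq, Matrix.transpose_mul]
    simp only [Matrix.mul_assoc]
  have hGramInv : (O'fᵀ * O'f)⁻¹ = T * ((Pᵀ * P)⁻¹ * Tᵀ) := by
    rw [hGram, Matrix.mul_inv_rev, Matrix.mul_inv_rev,
      Matrix.inv_eq_right_inv hUT, Matrix.inv_eq_right_inv hUtTt]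
  have hA'eq : A' = T * A * U := by
    rw [hA', hGramInv, hO'feq, hO'leq, Matrix.transpose_mul]
    calc T * ((Pᵀ * P)⁻¹ * Tᵀ) * (Uᵀ * Pᵀ) * (P * A * U)
        = T * ((Pᵀ * P)⁻¹ * (Tᵀ * Uᵀ * (Pᵀ * (P * (A * U))))) := by
          simp only [Matrix.mul_assoc]
      _ = T * ((Pᵀ * P)⁻¹ * (Pᵀ * (P * (A * U)))) := by rw [hTtUt, Matrix.one_mul]
      _ = T * ((Pᵀ * P)⁻¹ * (Pᵀ * P) * (A * U)) := by simp only [Matrix.mul_assoc]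
      _ = T * (A * U) := by rw [Matrix.nonsing_inv_mul _ hPtP, Matrix.one_mul]
      _ = T * A * U := by rw [Matrix.mul_assoc]
  have hpow : ∀ j : ℕ, A' ^ j = T * A ^ j * U := by
    intro j
    induction j with
    | zero => simp [pow_zero, Matrix.mul_one, hTU]
    | succ j ih =>
        rw [pow_succ, ih, hA'eq, pow_succ]
        calc T * A ^ j * U * (T * A * U) = T * A ^ j * (U * T) * (A * U) := by
              simp only [Matrix.mul_assoc]
          _ = T * A ^ j * (A * U) := by rw [hUT, Matrix.mul_one]
          _ = T * (A ^ j * A) * U := by simp only [Matrix.mul_assoc]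
  intro k hk1 hk2
  rw [hC'eq, hB'eq, hpow]
  calc C * U * (T * A ^ (k - 1) * U) * (T * B)
      = C * (U * T) * (A ^ (k - 1) * (U * T) * B) := by simp only [Matrix.mul_assoc]
    _ = C * (A ^ (k - 1) * B) := by rw [hUT, Matrix.mul_one, Matrix.mul_one]
    _ = C * A ^ (k - 1) * B := by rw [Matrix.mul_assoc]
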